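/- Let E be a metric space, let α be a type, let ψ : E → α, let s ∈ E and a ∈ α, and suppose there exists ε > 0 such that for every f ∈ E with dist(f, s) < ε one has ψ(f) = a. Let (Ω, F, P) be a probability space, let (Z_k) be a sequence of E-valued random variables converging in probability to s, let (G_k) be a sequence of sub-σ-algebras of F, and set Y_k = E[1_{{ψ(Z_k) = a}} | G_k]. Then Y_k converges to 1 in probability as k → ∞. -/

import Mathlib

open MeasureTheory Filter

/-- Abstract form of the paper's Lemma: if `ψ` is locally stable at `s` (there is
`ε > 0` with `ψ f = a` whenever `dist f s < ε`), `(Z k)` converges in probability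
to `s`, and `Y k = E[1_{{ψ (Z k) = a}} | G k]` for sub-σ-algebras `G k`, then the
(bootstrap support) random variables `Y k` converge to `1` in probability. -/
theorem bootstrap_support_lemma
    {E : Type*} [MetricSpace E] {α : Type*} (ψ : E → α) (s : E) (a : α)
    (hstable : ∃ ε > (0 : ℝ), ∀ f : E, dist f s < ε → ψ f = a)
    {Ω : Type*} [F : MeasurableSpace Ω] (P : Measure Ω) [IsProbabilityMeasure P]
    (Z : ℕ → Ω → E)
    (hZmeas : ∀ k, MeasurableSet {ω | ψ (Z k ω) = a})
    (hconv : ∀ δ > (0 : ℝ),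
      Tendsto (fun k => P {ω | δ < dist (Z k ω) s}) atTop (nhds 0))
    (G : ℕ → MeasurableSpace Ω) (hG : ∀ k, G k ≤ F)
    (Y : ℕ → Ω → ℝ)
    (hY : ∀ k,
      Y k = P[Set.indicator {ω | ψ (Z k ω) = a} (fun _ => (1 : ℝ)) | G k]) :
    ∀ δ > (0 : ℝ),
      Tendsto (fun k => P {ω | δ < |Y k ω - 1|}) atTop (nhds 0) := by
  obtain ⟨ε, hε, hψ⟩ := hstable
  intro δ hδ
  set A : ℕ → Set Ω := fun k => {ω | ψ (Z k ω) = a} with hA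
  -- the indicator functions
  set f : ℕ → Ω → ℝ := fun k => Set.indicator (A k) (fun _ => (1 : ℝ)) with hf
  have hf_int : ∀ k, Integrable (f k) P := fun k =>
    (integrable_const (1 : ℝ)).indicator (hZmeas k)
  -- P (A k)ᶜ → 0
  have hcompl : Tendsto (fun k => P (A k)ᶜ) atTop (nhds 0) := by
    have hsub : ∀ k, (A k)ᶜ ⊆ {ω | ε / 2 < dist (Z k ω) s} := by
      intro k ω hω
      by_contra h
      exact hω (hψ _ (lt_of_le_of_lt (not_lt.mp h) (by linarith)))
    have h0 : Tendsto (fun k => P {ω | ε / 2 < dist (Z k ω) s}) atTop (nhds 0) :=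
      hconv (ε / 2) (by linarith)
    exact tendsto_of_tendsto_of_tendsto_of_le_of_le tendsto_const_nhds h0
      (fun k => zero_le) (fun k => measure_mono (hsub k))
  have hcomplR : Tendsto (fun k => (P (A k)ᶜ).toReal) atTop (nhds 0) := by
    have := (ENNReal.tendsto_toReal (by simp : (0 : ENNReal) ≠ ⊤)).comp hcompl
    simpa [Function.comp_def] using this
  -- integral of Y k
  have hY_int : ∀ k, Integrable (Y k) P := fun k => by
    rw [hY k]; exact integrable_condExp
  have hYint_eq : ∀ k, ∫ ω, Y k ω ∂P = (P (A k)).toReal := by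
    intro k
    rw [hY k, integral_condExp (hG k), integral_indicator (hZmeas k)]
    simp; rfl
  -- Y k ≤ 1 a.e.
  have hYle : ∀ k, ∀ᵐ ω ∂P, Y k ω ≤ 1 := by
    intro k
    have h1 : (P[fun _ => (1 : ℝ) | G k]) = fun _ => (1 : ℝ) :=
      condExp_const (μ := P) (hG k) (1 : ℝ)
    have hmono : Y k ≤ᵐ[P] P[fun _ => (1 : ℝ) | G k] := by
      rw [hY k]
      refine condExp_mono (hf_int k) (integrable_const 1) (ae_of_all _ ?_)
      intro ω
      exact Set.indicator_le_self' (fun _ _ => zero_le_one) ω |>.trans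
        (by by_cases h : ω ∈ A k <;> simp [hf, Set.indicator, h])
    filter_upwards [hmono] with ω h2
    exact h2.trans (le_of_eq (congrFun h1 ω))
  -- measure bound via Markov
  have hbound : ∀ k,
      (P {ω | δ < |Y k ω - 1|}).toReal ≤ (P (A k)ᶜ).toReal / δ := by
    intro k
    have hg_int : Integrable (fun ω => 1 - Y k ω) P :=
      (integrable_const 1).sub (hY_int k)
    have hg_nonneg : 0 ≤ᵐ[P] fun ω => 1 - Y k ω := by
      filter_upwards [hYle k] with ω h
      simp only [Pi.zero_apply]; linarith
    have hmarkov := mul_meas_ge_le_integral_of_nonneg hg_nonneg hg_int δ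
    have hsetle : P {ω | δ < |Y k ω - 1|} ≤ P {ω | δ ≤ 1 - Y k ω} := by
      refine measure_mono_ae ?_
      filter_upwards [hYle k] with ω h hω
      have hω' : δ < |Y k ω - 1| := hω
      rw [abs_sub_comm, abs_of_nonneg (by linarith)] at hω'
      show δ ≤ 1 - Y k ω
      linarith
    have hint : ∫ ω, (1 - Y k ω) ∂P = (P (A k)ᶜ).toReal := by
      rw [integral_sub (integrable_const 1) (hY_int k), hYint_eq k]
      simp only [integral_const, measure_univ, ENNReal.toReal_one, smul_eq_mul, one_mul]
      rw [measure_compl (hZmeas k) (measure_ne_top _ _),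
        ENNReal.toReal_sub_of_le (measure_mono (Set.subset_univ _)) (measure_ne_top _ _)]
      simp; rfl
    have h2 : δ * (P {ω | δ ≤ 1 - Y k ω}).toReal ≤ (P (A k)ᶜ).toReal := by
      rw [← hint]; exact hmarkov
    have h3 : (P {ω | δ < |Y k ω - 1|}).toReal ≤ (P {ω | δ ≤ 1 - Y k ω}).toReal :=
      ENNReal.toReal_mono (measure_ne_top _ _) hsetle
    rw [le_div_iff₀ hδ]
    calc (P {ω | δ < |Y k ω - 1|}).toReal * δ
        ≤ (P {ω | δ ≤ 1 - Y k ω}).toReal * δ := by nlinarith [h3]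
      _ ≤ (P (A k)ᶜ).toReal := by rw [mul_comm]; exact h2
  -- squeeze in ℝ, then transfer back to ℝ≥0∞
  have htoReal : Tendsto (fun k => (P {ω | δ < |Y k ω - 1|}).toReal) atTop (nhds 0) := by
    have hub : Tendsto (fun k => (P (A k)ᶜ).toReal / δ) atTop (nhds 0) := by
      simpa using hcomplR.div_const δ
    exact tendsto_of_tendsto_of_tendsto_of_le_of_le tendsto_const_nhds hub
      (fun k => ENNReal.toReal_nonneg) hbound
  have := ENNReal.tendsto_ofReal htoReal
  simp only [ENNReal.ofReal_zero] at this
  refine this.congr fun k => ?_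
  rw [ENNReal.ofReal_toReal (measure_ne_top _ _)]
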